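/- Let p∈(1,∞], let ρ:ℝ→(0,∞) be a differentiable even probability density (ρ(-x)=ρ(x)), and let ν:(-1/2,1/2)→ℝ be an odd (ν(-t)=-ν(t)), increasing, twice differentiable bijection with ν(0)=0 and ν(t)→±∞ as t→±1/2. If ‖h_{1,p*}‖_{L_∞(-1/2,1/2)}<∞ and ‖h_{2,p*}‖_{L_p(-1/2,1/2)}<∞, then for every f∈F_{1,p}(ℝ) the function g_{f,ν} belongs to W_{1,p}((-1/2,1/2)) and ‖g_{f,ν}'‖_{L_p(-1/2,1/2)} ≤ (‖h_{1,p*}‖_{L_∞(-1/2,1/2)} + ‖h_{2,p*}‖_{L_p(-1/2,1/2)})·‖f'‖_{L_p(ℝ)}. -/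

import Mathlib

open MeasureTheory Set Filter ENNReal

open Topology

section helpers

lemma lintegral_image_eq_lintegral_abs_deriv_mul' {s : Set ℝ} {f f' : ℝ → ℝ}
    (hs : MeasurableSet s) (hf' : ∀ x ∈ s, HasDerivWithinAt f (f' x) s x) (hf : InjOn f s)
    (g : ℝ → ℝ≥0∞) :
    ∫⁻ x in f '' s, g x = ∫⁻ x in s, ENNReal.ofReal |f' x| * g (f x) := by
  simpa only [ContinuousLinearMap.det_toSpanSingleton] using
    lintegral_image_eq_lintegral_abs_det_fderiv_mul volume hs
      (fun x hx => (hf' x hx).hasFDerivWithinAt) hf g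

lemma parts_aux {a b : ℝ} (hab : a ≤ b) (A G G' u W : ℝ → ℝ)
    (hG : ∀ s ∈ Set.Icc a b, HasDerivAt G (G' s) s)
    (hA : IntegrableOn A (Set.Ioc a b) volume)
    (hG'int : ∀ r ∈ Set.Ioc a b, IntegrableOn G' (Set.Ioc r b) volume)
    (hu : ∀ s ∈ Set.Icc a b, u s = ∫ r in Set.Ioc a s, A r)
    (huG' : IntegrableOn (fun s => u s * G' s) (Set.Ioc a b) volume)
    (hW : ∀ s ∈ Set.Ioc a b, (∫ r in Set.Ioc a s, |A r|) ≤ W s)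
    (hWG' : IntegrableOn (fun s => W s * |G' s|) (Set.Ioc a b) volume) :
    ∫ s in Set.Ioc a b, (A s * G s + u s * G' s) = u b * G b := by
  rcases eq_or_lt_of_le hab with rfl | hab'
  · have hua : u a = 0 := by simpa using hu a (by simp)
    simp [hua]
  -- measurability of G'
  have hG'meas : AEStronglyMeasurable G' (volume.restrict (Set.Ioc a b)) := by
    have hcover : Set.Ioc a b = ⋃ n : ℕ, Set.Ioc (a + (b - a) / (n + 1)) b := by
      ext x
      simp only [Set.mem_Ioc, Set.mem_iUnion]
      constructor
      · rintro ⟨hx1, hx2⟩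
        obtain ⟨n, hn⟩ := exists_nat_gt ((b - a) / (x - a))
        refine ⟨n, ?_, hx2⟩
        have hxa : 0 < x - a := by linarith
        have hba : 0 < b - a := by linarith
        have h1 : (b - a) / (x - a) < (n : ℝ) + 1 := by linarith [hn]
        have h2 : b - a < ((n : ℝ) + 1) * (x - a) := by
          rwa [div_lt_iff₀ hxa] at h1
        have h3 : (b - a) / ((n : ℝ) + 1) < x - a := by
          rw [div_lt_iff₀ (by positivity)]
          linarith
        linarith
      · rintro ⟨n, hx1, hx2⟩
        have hba : 0 < b - a := by linarith
        have hpos : 0 < (b - a) / ((n : ℝ) + 1) := by positivity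
        exact ⟨by linarith, hx2⟩
    rw [hcover, aestronglyMeasurable_iUnion_iff]
    intro n
    have hba : 0 < b - a := by linarith
    have hpos : 0 < (b - a) / ((n : ℝ) + 1) := by positivity
    have hle : (b - a) / ((n : ℝ) + 1) ≤ b - a := by
      rw [div_le_iff₀ (by positivity)]
      nlinarith
    exact (hG'int (a + (b - a) / (n + 1)) ⟨by linarith, by linarith⟩).aestronglyMeasurable
  have hGcont : ContinuousOn G (Set.Icc a b) := fun s hs =>
    (hG s hs).continuousAt.continuousWithinAt
  obtain ⟨C, hC⟩ : ∃ C, ∀ s ∈ Set.Icc a b, ‖G s‖ ≤ C := by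
    rcases isCompact_Icc.exists_bound_of_continuousOn hGcont with ⟨C, hC⟩
    exact ⟨C, hC⟩
  have hGmeas : AEStronglyMeasurable G (volume.restrict (Set.Ioc a b)) :=
    (hGcont.mono Set.Ioc_subset_Icc_self).aestronglyMeasurable measurableSet_Ioc
  have hAG : IntegrableOn (fun s => A s * G s) (Set.Ioc a b) volume := by
    have h := hA.bdd_mul (c := C) hGmeas
      ((ae_restrict_iff' measurableSet_Ioc).2 (Eventually.of_forall fun s hs =>
        hC s (Set.Ioc_subset_Icc_self hs)))
    exact IntegrableOn.congr_fun h (fun x _ => mul_comm _ _) measurableSet_Ioc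
  -- FTC for G on [r, b]
  have hFTC : ∀ r ∈ Set.Ioc a b, ∫ s in Set.Ioc r b, G' s = G b - G r := by
    intro r hr
    have hint : IntervalIntegrable G' volume r b :=
      (intervalIntegrable_iff_integrableOn_Ioc_of_le hr.2).2 (hG'int r hr)
    have key := intervalIntegral.integral_eq_sub_of_hasDerivAt (f := G) (f' := G')
      (fun s hs => by
        rw [Set.uIcc_of_le hr.2] at hs
        exact hG s ⟨hr.1.le.trans hs.1, hs.2⟩) hint
    rw [← intervalIntegral.integral_of_le hr.2]
    exact key
  -- Fubini
  set μab := volume.restrict (Set.Ioc a b) with hμab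
  set F : ℝ × ℝ → ℝ := fun z => (Set.Ioc a z.1).indicator A z.2 * G' z.1 with hFdef
  have hFmeas : AEStronglyMeasurable F (μab.prod μab) := by
    have hS : MeasurableSet {z : ℝ × ℝ | a < z.2 ∧ z.2 ≤ z.1} :=
      (measurableSet_lt measurable_const measurable_snd).inter
        (measurableSet_le measurable_snd measurable_fst)
    have hbase : AEStronglyMeasurable (fun z : ℝ × ℝ => A z.2 * G' z.1) (μab.prod μab) :=
      AEStronglyMeasurable.mul (f := fun z : ℝ × ℝ => A z.2) (g := fun z : ℝ × ℝ => G' z.1)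
        (hA.aestronglyMeasurable.comp_snd) hG'meas.comp_fst
    have hFeq : F = {z : ℝ × ℝ | a < z.2 ∧ z.2 ≤ z.1}.indicator
        (fun z => A z.2 * G' z.1) := by
      funext z
      simp only [hFdef, Set.indicator_apply, Set.mem_setOf_eq, Set.mem_Ioc]
      by_cases h : a < z.2 ∧ z.2 ≤ z.1 <;> simp [h]
    rw [hFeq]
    exact hbase.indicator hS
  have hinner : ∀ s ∈ Set.Ioc a b,
      ∫ r, F (s, r) ∂μab = (∫ r in Set.Ioc a s, A r) * G' s := by
    intro s hs
    have : ∀ r, F (s, r) = (Set.Ioc a s).indicator A r * G' s := fun r => rfl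
    calc ∫ r, F (s, r) ∂μab = ∫ r, (Set.Ioc a s).indicator A r * G' s ∂μab := rfl
      _ = (∫ r, (Set.Ioc a s).indicator A r ∂μab) * G' s := by
          rw [integral_mul_const]
      _ = (∫ r in Set.Ioc a s, A r) * G' s := by
          rw [hμab, integral_indicator measurableSet_Ioc,
            Measure.restrict_restrict measurableSet_Ioc, Set.Ioc_inter_Ioc,
            max_self, min_eq_left hs.2]
  have hinnernorm : ∀ s ∈ Set.Ioc a b,
      ∫ r, ‖F (s, r)‖ ∂μab = (∫ r in Set.Ioc a s, |A r|) * |G' s| := by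
    intro s hs
    calc ∫ r, ‖F (s, r)‖ ∂μab
        = ∫ r, (Set.Ioc a s).indicator (fun x => |A x|) r * |G' s| ∂μab := by
          refine integral_congr_ae (Eventually.of_forall fun r => ?_)
          show ‖(Set.Ioc a s).indicator A r * G' s‖ = _
          by_cases hr : r ∈ Set.Ioc a s <;>
            simp [hr, abs_mul, Real.norm_eq_abs]
      _ = (∫ r, (Set.Ioc a s).indicator (fun x => |A x|) r ∂μab) * |G' s| := by
          rw [integral_mul_const]
      _ = (∫ r in Set.Ioc a s, |A r|) * |G' s| := by
          rw [hμab, integral_indicator measurableSet_Ioc,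
            Measure.restrict_restrict measurableSet_Ioc, Set.Ioc_inter_Ioc,
            max_self, min_eq_left hs.2]
  have hFint : Integrable F (μab.prod μab) := by
    rw [integrable_prod_iff hFmeas]
    constructor
    · refine Eventually.of_forall fun s => ?_
      have : Integrable (fun r => (Set.Ioc a s).indicator A r * G' s) μab :=
        (hA.indicator measurableSet_Ioc).mul_const (G' s)
      exact this
    · refine Integrable.mono' hWG' hFmeas.norm.integral_prod_right' ?_
      refine (ae_restrict_iff' measurableSet_Ioc).2 (Eventually.of_forall fun s hs => ?_)
      have h1 : (0:ℝ) ≤ ∫ r, ‖F (s, r)‖ ∂μab :=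
        integral_nonneg fun r => norm_nonneg _
      rw [Real.norm_eq_abs, abs_of_nonneg h1, hinnernorm s hs]
      exact mul_le_mul_of_nonneg_right (hW s hs) (abs_nonneg _)
  have hswap := integral_integral_swap (f := fun s r => F (s, r)) hFint
  have hL : ∫ s, (∫ r, F (s, r) ∂μab) ∂μab = ∫ s in Set.Ioc a b, u s * G' s := by
    rw [hμab]
    refine setIntegral_congr_fun measurableSet_Ioc fun s hs => ?_
    rw [← hμab, hinner s hs, ← hu s (Set.Ioc_subset_Icc_self hs)]
  have hR : ∫ r, (∫ s, F (s, r) ∂μab) ∂μab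
      = (∫ r in Set.Ioc a b, A r) * G b - ∫ r in Set.Ioc a b, A r * G r := by
    have hinner2 : ∀ r ∈ Set.Ioc a b, ∫ s, F (s, r) ∂μab = A r * (G b - G r) := by
      intro r hr
      calc ∫ s, F (s, r) ∂μab
          = ∫ s, (Set.Icc r b).indicator (fun x => A r * G' x) s ∂μab := by
            refine integral_congr_ae ((ae_restrict_iff' measurableSet_Ioc).2
              (Eventually.of_forall fun s hs => ?_))
            show (Set.Ioc a s).indicator A r * G' s = _
            by_cases hrs : r ≤ s
            · rw [Set.indicator_of_mem (Set.mem_Ioc.2 ⟨hr.1, hrs⟩),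
                Set.indicator_of_mem (Set.mem_Icc.2 ⟨hrs, hs.2⟩)]
            · rw [Set.indicator_of_notMem (fun hx => hrs (Set.mem_Ioc.1 hx).2),
                Set.indicator_of_notMem (fun hx => hrs (Set.mem_Icc.1 hx).1), zero_mul]
        _ = ∫ s in Set.Icc r b, A r * G' s := by
            have hsub : Set.Icc r b ∩ Set.Ioc a b = Set.Icc r b :=
              Set.inter_eq_left.2 fun x hx => ⟨hr.1.trans_le hx.1, hx.2⟩
            rw [hμab, integral_indicator measurableSet_Icc,
              Measure.restrict_restrict measurableSet_Icc, hsub]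
        _ = A r * ∫ s in Set.Icc r b, G' s := by rw [integral_const_mul]
        _ = A r * (G b - G r) := by
            rw [integral_Icc_eq_integral_Ioc, hFTC r hr]
    calc ∫ r, (∫ s, F (s, r) ∂μab) ∂μab
        = ∫ r in Set.Ioc a b, A r * (G b - G r) := by
          rw [hμab]
          exact setIntegral_congr_fun measurableSet_Ioc fun r hr => by
            rw [← hμab, hinner2 r hr]
      _ = ∫ r in Set.Ioc a b, (A r * G b - A r * G r) := by
          refine setIntegral_congr_fun measurableSet_Ioc fun r _ => by ring
      _ = (∫ r in Set.Ioc a b, A r * G b) - ∫ r in Set.Ioc a b, A r * G r :=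
          integral_sub (hA.mul_const (G b)) hAG
      _ = (∫ r in Set.Ioc a b, A r) * G b - ∫ r in Set.Ioc a b, A r * G r := by
          rw [integral_mul_const]
  have hub : u b = ∫ r in Set.Ioc a b, A r := hu b ⟨hab, le_rfl⟩
  have huG'val : ∫ s in Set.Ioc a b, u s * G' s
      = u b * G b - ∫ r in Set.Ioc a b, A r * G r := by
    rw [← hL, hswap, hR, hub]
  rw [integral_add hAG huG', huG'val]
  ring

end helpers

/-- **Theorem 3, `D = ℝ`.** Let `p ∈ (1,∞]` with `1/p* = 1 - 1/p = q`,
`ρ` a differentiable even positive probability density on `ℝ`, and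
`ν : (-1/2,1/2) → ℝ` an odd, increasing, twice differentiable bijection with `ν(0) = 0`
and `ν(t) → ±∞` as `t → ±1/2`.  With `h_{1,p*}(t) = ρ(ν(t)) (ν'(t))^{1+1/p*}` and
`h_{2,p*}(t) = (d/dt)[ρ(ν(t)) ν'(t)] |ν(t)|^{1/p*}`, if `‖h_{1,p*}‖_{L_∞(-1/2,1/2)} < ∞`
and `‖h_{2,p*}‖_{L_p(-1/2,1/2)} < ∞`, then for every `f ∈ F_{1,p}(ℝ)` the function
`g_{f,ν}(t) = f(ν(t)) ρ(ν(t)) ν'(t)` belongs to `W_{1,p}((-1/2,1/2))` with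
`‖g_{f,ν}'‖_{L_p(-1/2,1/2)} ≤ (‖h_{1,p*}‖_{L_∞} + ‖h_{2,p*}‖_{L_p}) ‖f'‖_{L_p(ℝ)}`. -/
theorem transformed_integrand_in_W1p_real_line
    (p : ℝ≥0∞) (hp : 1 < p) (q : ℝ) (hq : q = 1 - (1 / p).toReal)
    (ρ ρ' : ℝ → ℝ) (hρ_pos : ∀ x, 0 < ρ x)
    (hρ_even : ∀ x, ρ (-x) = ρ x)
    (hρ_deriv : ∀ x, HasDerivAt ρ (ρ' x) x)
    (hρ_int : Integrable ρ)
    (hρ_prob : ∫ x, ρ x = 1)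
    (ν ν' ν'' : ℝ → ℝ)
    (hν0 : ν 0 = 0)
    (hν_odd : ∀ t ∈ Ioo (-(1/2) : ℝ) (1/2), ν (-t) = -ν t)
    (hν_mono : StrictMonoOn ν (Ioo (-(1/2) : ℝ) (1/2)))
    (hν_surj : SurjOn ν (Ioo (-(1/2) : ℝ) (1/2)) univ)
    (hν_deriv : ∀ t ∈ Ioo (-(1/2) : ℝ) (1/2), HasDerivAt ν (ν' t) t)
    (hν_deriv2 : ∀ t ∈ Ioo (-(1/2) : ℝ) (1/2), HasDerivAt ν' (ν'' t) t)
    (hν_tendsto_top : Tendsto ν (nhdsWithin (1/2 : ℝ) (Iio (1/2))) atTop)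
    (hν_tendsto_bot : Tendsto ν (nhdsWithin (-(1/2) : ℝ) (Ioi (-(1/2)))) atBot)
    (h₁ h₂ : ℝ → ℝ)
    (hh₁ : ∀ t, h₁ t = ρ (ν t) * ν' t ^ (1 + q))
    (hh₂ : ∀ t, h₂ t = (ρ' (ν t) * ν' t ^ 2 + ρ (ν t) * ν'' t) * |ν t| ^ q)
    (hh₁_fin : eLpNorm h₁ ⊤ (volume.restrict (Ioo (-(1/2) : ℝ) (1/2))) < ⊤)
    (hh₂_fin : eLpNorm h₂ p (volume.restrict (Ioo (-(1/2) : ℝ) (1/2))) < ⊤)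
    (f f' : ℝ → ℝ)
    (hf0 : f 0 = 0)
    (hf_int : ∀ x : ℝ, IntervalIntegrable f' volume 0 x)
    (hf_repr : ∀ x : ℝ, f x = ∫ s in (0:ℝ)..x, f' s)
    (hf'Lp : MemLp f' p volume)
    (g : ℝ → ℝ) (hg : ∀ t, g t = f (ν t) * ρ (ν t) * ν' t) :
    g 0 = 0 ∧
    ∃ g' : ℝ → ℝ,
      (∀ t ∈ Ioo (-(1/2) : ℝ) (1/2), IntervalIntegrable g' volume 0 t ∧
        g t = ∫ s in (0:ℝ)..t, g' s) ∧
      eLpNorm g' p (volume.restrict (Ioo (-(1/2) : ℝ) (1/2))) ≤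
        (eLpNorm h₁ ⊤ (volume.restrict (Ioo (-(1/2) : ℝ) (1/2))) +
          eLpNorm h₂ p (volume.restrict (Ioo (-(1/2) : ℝ) (1/2)))) *
          eLpNorm f' p volume ∧
      eLpNorm g' p (volume.restrict (Ioo (-(1/2) : ℝ) (1/2))) < ⊤ := by
  set I : Set ℝ := Ioo (-(1/2) : ℝ) (1/2) with hIdef
  have hImeas : MeasurableSet I := measurableSet_Ioo
  have h0I : (0:ℝ) ∈ I := by constructor <;> norm_num
  have hp1 : 1 ≤ p := hp.le
  have hp0 : p ≠ 0 := fun h => by simp [h] at hp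
  have hqle : (1/p).toReal ≤ 1 := by
    rw [one_div]
    calc (p⁻¹).toReal ≤ (1 : ℝ≥0∞).toReal :=
      ENNReal.toReal_mono one_ne_top (ENNReal.inv_le_one.2 hp1)
    _ = 1 := by simp
  have hq0 : 0 ≤ q := by rw [hq]; linarith
  have hq1 : q ≤ 1 := by
    rw [hq]
    have : (0:ℝ) ≤ (1/p).toReal := ENNReal.toReal_nonneg
    linarith
  have hν'nonneg : ∀ s ∈ I, 0 ≤ ν' s := by
    intro s hs
    have hd := hν_deriv s hs
    have h1 : Tendsto (slope ν s) (𝓝[>] s) (𝓝 (ν' s)) :=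
      (hasDerivAt_iff_tendsto_slope.1 hd).mono_left
        (nhdsWithin_mono s fun x hx => ne_of_gt hx)
    refine ge_of_tendsto h1 ?_
    have hIopen : I ∈ 𝓝 s := isOpen_Ioo.mem_nhds hs
    filter_upwards [self_mem_nhdsWithin, mem_nhdsWithin_of_mem_nhds hIopen] with x hx hxI
    have hlt : ν s < ν x := hν_mono hs hxI hx
    rw [slope_def_field]
    apply div_nonneg (by linarith) (by simp at hx; linarith)
  have hνcont : ContinuousOn ν I := fun s hs => (hν_deriv s hs).continuousAt.continuousWithinAt
  have hν'cont : ContinuousOn ν' I := fun s hs => (hν_deriv2 s hs).continuousAt.continuousWithinAt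
  have hInj : InjOn ν I := hν_mono.injOn
  have hνDW : ∀ s ∈ I, HasDerivWithinAt ν (ν' s) I s := fun s hs => (hν_deriv s hs).hasDerivWithinAt
  have hsubI : ∀ c ∈ I, ∀ d ∈ I, Icc c d ⊆ I := fun c hc d hd x hx =>
    ⟨hc.1.trans_le hx.1, hx.2.trans_lt hd.2⟩
  have himage : ∀ c ∈ I, ∀ d ∈ I, c ≤ d → ν '' Icc c d = Icc (ν c) (ν d) := by
    intro c hc d hd hcd
    have hsub := hsubI c hc d hd
    ext y
    constructor
    · rintro ⟨x, hx, rfl⟩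
      exact ⟨hν_mono.monotoneOn hc (hsub hx) hx.1, hν_mono.monotoneOn (hsub hx) hd hx.2⟩
    · intro hy
      obtain ⟨x, hxI, hxy⟩ := hν_surj (mem_univ y)
      refine ⟨x, ⟨?_, ?_⟩, hxy⟩
      · by_contra h
        push_neg at h
        have := hν_mono hxI hc h
        rw [hxy] at this
        exact absurd hy.1 (not_le.2 this)
      · by_contra h
        push_neg at h
        have := hν_mono hd hxI h
        rw [hxy] at this
        exact absurd hy.2 (not_le.2 this)
  have himgI : ν '' I = univ := eq_univ_of_univ_subset hν_surj
  -- measurable representative of f'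
  have hf'meas := hf'Lp.aestronglyMeasurable
  set f'm : ℝ → ℝ := hf'meas.mk f' with hf'mdef
  have hf'm_sm : StronglyMeasurable f'm := hf'meas.stronglyMeasurable_mk
  have hf'm_ae : f' =ᵐ[volume] f'm := hf'meas.ae_eq_mk
  have hf'm_meas : Measurable f'm := hf'm_sm.measurable
  -- continuity of f
  have hf_int2 : ∀ c d : ℝ, IntervalIntegrable f' volume c d := fun c d =>
    (hf_int c).symm.trans (hf_int d)
  have hfcont : Continuous f := by
    have h1 : Continuous fun x => ∫ s in (0:ℝ)..x, f' s :=
      intervalIntegral.continuous_primitive (fun c d => hf_int2 c d) 0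
    have h2 : f = fun x => ∫ s in (0:ℝ)..x, f' s := funext hf_repr
    rw [h2]; exact h1
  -- Hölder bounds
  set M : ℝ := (eLpNorm f' p volume).toReal with hMdef
  have hM0 : 0 ≤ M := ENNReal.toReal_nonneg
  have hMfin : eLpNorm f' p volume ≠ ⊤ := hf'Lp.2.ne
  have hofM : ENNReal.ofReal M = eLpNorm f' p volume := ENNReal.ofReal_toReal hMfin
  have hkeyI : ∀ c d : ℝ, c ≤ d → (∫ r in Ioc c d, |f' r|) ≤ M * (d - c) ^ q := by
    intro c d hcd
    have hae : AEStronglyMeasurable f' (volume.restrict (Ioc c d)) := hf'meas.restrict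
    have hint : IntegrableOn f' (Ioc c d) volume :=
      (intervalIntegrable_iff_integrableOn_Ioc_of_le hcd).1 (hf_int2 c d)
    have h1 := eLpNorm_le_eLpNorm_mul_rpow_measure_univ (p := 1) (q := p) hp1 hae
    have hexp : 1/(1:ℝ≥0∞).toReal - 1/p.toReal = q := by
      have h' : (1/p).toReal = 1/p.toReal := by
        rw [one_div, ENNReal.toReal_inv, one_div]
      rw [hq, h']
      norm_num
    have hμuniv : (volume.restrict (Ioc c d)) univ = ENNReal.ofReal (d - c) := by
      rw [Measure.restrict_apply_univ, Real.volume_Ioc]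
    rw [hexp, hμuniv] at h1
    have h2 : eLpNorm f' p (volume.restrict (Ioc c d)) ≤ eLpNorm f' p volume :=
      eLpNorm_mono_measure _ Measure.restrict_le_self
    have h3 : ENNReal.ofReal (∫ r in Ioc c d, |f' r|) =
        eLpNorm f' 1 (volume.restrict (Ioc c d)) := by
      rw [eLpNorm_one_eq_lintegral_enorm]
      rw [show (fun r => |f' r|) = fun r => ‖f' r‖ from funext fun r => (Real.norm_eq_abs _).symm]
      exact ofReal_integral_norm_eq_lintegral_enorm hint
    have h4 : ENNReal.ofReal (∫ r in Ioc c d, |f' r|) ≤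
        eLpNorm f' p volume * ENNReal.ofReal (d - c) ^ q := by
      rw [h3]
      exact h1.trans (mul_le_mul_left h2 _)
    have h5 : (ENNReal.ofReal (∫ r in Ioc c d, |f' r|)).toReal ≤
        (eLpNorm f' p volume * ENNReal.ofReal (d - c) ^ q).toReal := by
      apply ENNReal.toReal_mono _ h4
      exact ENNReal.mul_ne_top hMfin
        (ENNReal.rpow_lt_top_of_nonneg hq0 ENNReal.ofReal_ne_top).ne
    rw [ENNReal.toReal_ofReal (integral_nonneg fun r => abs_nonneg _)] at h5
    rwa [ENNReal.toReal_mul, ← ENNReal.toReal_rpow,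
      ENNReal.toReal_ofReal (by linarith)] at h5
  have habsf : ∀ x : ℝ, |f x| ≤ M * |x| ^ q := by
    intro x
    rcases le_total 0 x with hx | hx
    · calc |f x| = |∫ r in (0:ℝ)..x, f' r| := by rw [hf_repr x]
        _ ≤ ∫ r in (0:ℝ)..x, |f' r| := intervalIntegral.abs_integral_le_integral_abs hx
        _ = ∫ r in Ioc 0 x, |f' r| := intervalIntegral.integral_of_le hx
        _ ≤ M * (x - 0) ^ q := hkeyI 0 x hx
        _ = M * |x| ^ q := by rw [sub_zero, abs_of_nonneg hx]
    · calc |f x| = |∫ r in x..0, f' r| := by rw [hf_repr x, intervalIntegral.integral_symm x 0, abs_neg]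
        _ ≤ ∫ r in x..0, |f' r| := intervalIntegral.abs_integral_le_integral_abs hx
        _ = ∫ r in Ioc x 0, |f' r| := intervalIntegral.integral_of_le hx
        _ ≤ M * (0 - x) ^ q := hkeyI x 0 hx
        _ = M * |x| ^ q := by rw [zero_sub, abs_of_nonpos hx]
  -- definitions
  set A : ℝ → ℝ := fun s => f'm (ν s) * ν' s with hAdef
  set G : ℝ → ℝ := fun s => ρ (ν s) * ν' s with hGdef
  set D : ℝ → ℝ := fun s => ρ' (ν s) * ν' s ^ 2 + ρ (ν s) * ν'' s with hDdef
  set g' : ℝ → ℝ := fun s => A s * G s + f (ν s) * D s with hg'def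
  have hh₂D : ∀ s, h₂ s = D s * |ν s| ^ q := fun s => hh₂ s
  have hGderiv : ∀ s ∈ I, HasDerivAt G (D s) s := by
    intro s hs
    have h1 : HasDerivAt (fun x => ρ (ν x)) (ρ' (ν s) * ν' s) s :=
      (hρ_deriv (ν s)).comp s (hν_deriv s hs)
    have h2 : HasDerivAt (fun x => ρ (ν x) * ν' x) (ρ' (ν s) * ν' s * ν' s + ρ (ν s) * ν'' s) s :=
      h1.mul (hν_deriv2 s hs)
    convert h2 using 1
    show ρ' (ν s) * ν' s ^ 2 + ρ (ν s) * ν'' s = _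
    ring
  have hGcont : ContinuousOn G I := fun s hs => (hGderiv s hs).continuousAt.continuousWithinAt
  -- change of variables
  have hCoV : ∀ (φ : ℝ → ℝ), ∀ c ∈ I, ∀ d ∈ I, c ≤ d →
      ∫ s in Icc c d, |ν' s| * φ (ν s) = ∫ x in Icc (ν c) (ν d), φ x := by
    intro φ c hc d hd hcd
    have hsub := hsubI c hc d hd
    rw [← himage c hc d hd hcd,
      integral_image_eq_integral_abs_deriv_smul measurableSet_Icc
        (fun x hx => ((hνDW x (hsub hx)).mono hsub)) (hInj.mono hsub) φ]
    simp only [smul_eq_mul]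
  have hCoVint : ∀ (φ : ℝ → ℝ), ∀ c ∈ I, ∀ d ∈ I, c ≤ d →
      IntegrableOn φ (Icc (ν c) (ν d)) volume →
      IntegrableOn (fun s => |ν' s| * φ (ν s)) (Icc c d) volume := by
    intro φ c hc d hd hcd h
    have hsub := hsubI c hc d hd
    have := (integrableOn_image_iff_integrableOn_abs_deriv_smul measurableSet_Icc
      (fun x hx => ((hνDW x (hsub hx)).mono hsub)) (hInj.mono hsub) φ).1
      (by rwa [himage c hc d hd hcd])
    simpa only [smul_eq_mul] using this
  have hf'mIcc : ∀ c d : ℝ, c ≤ d → IntegrableOn f'm (Icc c d) volume := by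
    intro c d hcd
    have h1 : IntegrableOn f' (Icc c d) volume := by
      have := (intervalIntegrable_iff_integrableOn_Ioc_of_le hcd).1 (hf_int2 c d)
      rwa [integrableOn_Icc_iff_integrableOn_Ioc]
    exact h1.congr_fun_ae (ae_restrict_of_ae hf'm_ae)
  have hA_int : ∀ c ∈ I, ∀ d ∈ I, c ≤ d → IntegrableOn A (Icc c d) volume := by
    intro c hc d hd hcd
    have hsub := hsubI c hc d hd
    have h2 := hCoVint f'm c hc d hd hcd
      (hf'mIcc (ν c) (ν d) (hν_mono.monotoneOn hc hd hcd))
    refine h2.congr_fun (fun x hx => ?_) measurableSet_Icc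
    simp only [hAdef]
    rw [abs_of_nonneg (hν'nonneg x (hsub hx)), mul_comm]
  have hA_repr : ∀ c ∈ I, ∀ d ∈ I, c ≤ d →
      ∫ s in Icc c d, A s = ∫ x in Icc (ν c) (ν d), f' x := by
    intro c hc d hd hcd
    have hsub := hsubI c hc d hd
    have h1 := hCoV f'm c hc d hd hcd
    have h2 : ∫ s in Icc c d, A s = ∫ s in Icc c d, |ν' s| * f'm (ν s) :=
      setIntegral_congr_fun measurableSet_Icc fun x hx => by
        simp only [hAdef]
        rw [abs_of_nonneg (hν'nonneg x (hsub hx)), mul_comm]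
    have h3 : ∫ x in Icc (ν c) (ν d), f'm x = ∫ x in Icc (ν c) (ν d), f' x :=
      integral_congr_ae (ae_restrict_of_ae hf'm_ae.symm)
    rw [h2, h1, h3]
  have hAabs_repr : ∀ c ∈ I, ∀ d ∈ I, c ≤ d →
      ∫ s in Icc c d, |A s| = ∫ x in Icc (ν c) (ν d), |f' x| := by
    intro c hc d hd hcd
    have hsub := hsubI c hc d hd
    have h1 := hCoV (fun x => |f'm x|) c hc d hd hcd
    have h2 : ∫ s in Icc c d, |A s| = ∫ s in Icc c d, |ν' s| * |f'm (ν s)| :=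
      setIntegral_congr_fun measurableSet_Icc fun x hx => by
        simp only [hAdef]
        rw [abs_mul, mul_comm]
    have h3 : ∫ x in Icc (ν c) (ν d), |f'm x| = ∫ x in Icc (ν c) (ν d), |f' x| :=
      integral_congr_ae (ae_restrict_of_ae (hf'm_ae.symm.fun_comp abs))
    rw [h2, h1, h3]
  -- representation of f ∘ ν as a primitive of A
  have hu_pos : ∀ s ∈ I, 0 ≤ s → f (ν s) = ∫ r in Ioc 0 s, A r := by
    intro s hs h0s
    have hνs : 0 ≤ ν s := by
      rw [← hν0]
      exact hν_mono.monotoneOn h0I hs h0s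
    rw [← integral_Icc_eq_integral_Ioc, hA_repr 0 h0I s hs h0s, hν0,
      integral_Icc_eq_integral_Ioc, ← intervalIntegral.integral_of_le hνs, ← hf_repr]
  have hu_neg : ∀ s ∈ I, s ≤ 0 → f (ν s) = -∫ r in Ioc s 0, A r := by
    intro s hs hs0
    have hνs : ν s ≤ 0 := by
      rw [← hν0]
      exact hν_mono.monotoneOn hs h0I hs0
    rw [← integral_Icc_eq_integral_Ioc, hA_repr s hs 0 h0I hs0, hν0,
      integral_Icc_eq_integral_Ioc, ← intervalIntegral.integral_of_le hνs,
      ← intervalIntegral.integral_symm, ← hf_repr]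
  -- measurability on I
  have hνae : AEMeasurable ν (volume.restrict I) := hνcont.aemeasurable hImeas
  have hρ'eq : ρ' = deriv ρ := funext fun x => ((hρ_deriv x).deriv).symm
  have hρcont : Continuous ρ := by
    rw [continuous_iff_continuousAt]
    exact fun x => (hρ_deriv x).continuousAt
  have hν''ae : AEStronglyMeasurable ν'' (volume.restrict I) := by
    refine (stronglyMeasurable_deriv ν').aestronglyMeasurable.congr ?_
    refine (ae_restrict_iff' hImeas).2 (Eventually.of_forall fun s hs => ?_)
    exact (hν_deriv2 s hs).deriv
  have hρ'νae : AEStronglyMeasurable (fun s => ρ' (ν s)) (volume.restrict I) := by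
    rw [hρ'eq]
    exact ((measurable_deriv ρ).comp_aemeasurable hνae).aestronglyMeasurable
  have hν'sm : AEStronglyMeasurable ν' (volume.restrict I) :=
    hν'cont.aestronglyMeasurable hImeas
  have hDmeasI : AEStronglyMeasurable D (volume.restrict I) := by
    refine AEStronglyMeasurable.add ?_ ?_
    · exact hρ'νae.mul ((hν'cont.pow 2).aestronglyMeasurable hImeas)
    · exact ((hρcont.comp_continuousOn hνcont).aestronglyMeasurable hImeas).mul hν''ae
  have hAmeasI : AEStronglyMeasurable A (volume.restrict I) :=
    ((hf'm_meas.comp_aemeasurable hνae).aestronglyMeasurable).mul hν'sm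
  have hfνcont : ContinuousOn (fun s => f (ν s)) I := hfcont.comp_continuousOn hνcont
  have hg'measI : AEStronglyMeasurable g' (volume.restrict I) :=
    (hAmeasI.mul (hGcont.aestronglyMeasurable hImeas)).add
      ((hfνcont.aestronglyMeasurable hImeas).mul hDmeasI)
  have hh₂measI : AEStronglyMeasurable h₂ (volume.restrict I) := by
    have : (fun s => D s * |ν s| ^ q) = h₂ := funext fun s => (hh₂D s).symm
    rw [← this]
    refine hDmeasI.mul ?_
    exact ((hνcont.abs.rpow_const fun x _ => Or.inr hq0).aestronglyMeasurable hImeas)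
  have hmonoI : ∀ {φ : ℝ → ℝ} {S : Set ℝ}, S ⊆ I →
      AEStronglyMeasurable φ (volume.restrict I) →
      AEStronglyMeasurable φ (volume.restrict S) := fun hS hφ =>
    hφ.mono_measure (Measure.restrict_mono hS le_rfl)
  -- integrability of h₂, D, f∘ν * D on compact subintervals
  have hh₂int : ∀ c ∈ I, ∀ d ∈ I, IntegrableOn h₂ (Ioc c d) volume := by
    intro c hc d hd
    rcases le_total d c with h | h
    · rw [Set.Ioc_eq_empty (not_lt.2 h)]
      exact integrableOn_empty
    have hsub : Ioc c d ⊆ I := fun x hx => (hsubI c hc d hd) (Ioc_subset_Icc_self hx)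
    have hmem : MemLp h₂ p (volume.restrict (Ioc c d)) := by
      refine ⟨hmonoI hsub hh₂measI, ?_⟩
      calc eLpNorm h₂ p (volume.restrict (Ioc c d))
          ≤ eLpNorm h₂ p (volume.restrict I) :=
            eLpNorm_mono_measure _ (Measure.restrict_mono hsub le_rfl)
        _ < ⊤ := hh₂_fin
    haveI : IsFiniteMeasure (volume.restrict (Ioc c d)) := by
      constructor
      rw [Measure.restrict_apply_univ]
      exact measure_Ioc_lt_top
    exact hmem.integrable hp1
  have hD_int : ∀ c ∈ I, ∀ d ∈ I, c ≤ d → (0 < ν c ∨ ν d < 0) →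
      IntegrableOn D (Ioc c d) volume := by
    intro c hc d hd hcd hsign
    have hsub : Ioc c d ⊆ I := fun x hx => (hsubI c hc d hd) (Ioc_subset_Icc_self hx)
    obtain ⟨m, hm0, hmle⟩ : ∃ m, 0 < m ∧ ∀ s ∈ Ioc c d, m ≤ |ν s| := by
      rcases hsign with h | h
      · refine ⟨ν c, h, fun s hs => ?_⟩
        have h2 : ν c < ν s := hν_mono hc (hsub hs) hs.1
        rw [abs_of_pos (lt_trans h h2)]
        linarith
      · refine ⟨-ν d, by linarith, fun s hs => ?_⟩
        have h2 : ν s ≤ ν d := hν_mono.monotoneOn (hsub hs) hd hs.2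
        rw [abs_of_neg (lt_of_le_of_lt h2 h)]
        linarith
    have hmq : 0 < m ^ q := Real.rpow_pos_of_pos hm0 q
    have hbound : ∀ s ∈ Ioc c d, |D s| ≤ (m ^ q)⁻¹ * |h₂ s| := by
      intro s hs
      have hrpow : m ^ q ≤ |ν s| ^ q := Real.rpow_le_rpow hm0.le (hmle s hs) hq0
      have hD2 : |h₂ s| = |D s| * |ν s| ^ q := by
        rw [hh₂D s, abs_mul, abs_of_nonneg (Real.rpow_nonneg (abs_nonneg _) q)]
      have h6 : |D s| * m ^ q ≤ |h₂ s| := by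
        rw [hD2]
        exact mul_le_mul_of_nonneg_left hrpow (abs_nonneg _)
      rw [inv_mul_eq_div, le_div_iff₀ hmq]
      exact h6
    refine Integrable.mono' (((hh₂int c hc d hd).abs).const_mul ((m ^ q)⁻¹))
      (hmonoI hsub hDmeasI) ?_
    refine (ae_restrict_iff' measurableSet_Ioc).2 (Eventually.of_forall fun s hs => ?_)
    rw [Real.norm_eq_abs]
    exact hbound s hs
  have hfνD_int : ∀ c ∈ I, ∀ d ∈ I, IntegrableOn (fun s => f (ν s) * D s) (Ioc c d) volume := by
    intro c hc d hd
    rcases le_total d c with h | h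
    · rw [Set.Ioc_eq_empty (not_lt.2 h)]
      exact integrableOn_empty
    have hsub : Ioc c d ⊆ I := fun x hx => (hsubI c hc d hd) (Ioc_subset_Icc_self hx)
    refine Integrable.mono' (((hh₂int c hc d hd).abs).const_mul M)
      (hmonoI hsub (((hfνcont.aestronglyMeasurable hImeas)).mul hDmeasI)) ?_
    refine (ae_restrict_iff' measurableSet_Ioc).2 (Eventually.of_forall fun s hs => ?_)
    have hD2 : |h₂ s| = |D s| * |ν s| ^ q := by
      rw [hh₂D s, abs_mul, abs_of_nonneg (Real.rpow_nonneg (abs_nonneg _) q)]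
    rw [Real.norm_eq_abs, abs_mul, hD2]
    calc |f (ν s)| * |D s| ≤ (M * |ν s| ^ q) * |D s| :=
          mul_le_mul_of_nonneg_right (habsf (ν s)) (abs_nonneg _)
      _ = M * (|D s| * |ν s| ^ q) := by ring
  -- reflection helper
  have hreflect : ∀ (φ : ℝ → ℝ) (c d : ℝ), c ≤ d → IntegrableOn φ (Ioc c d) volume →
      IntegrableOn (fun s => φ (-s)) (Ioc (-d) (-c)) volume := by
    intro φ c d h hi
    have h1 : IntervalIntegrable φ volume c d :=
      (intervalIntegrable_iff_integrableOn_Ioc_of_le h).2 hi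
    have h2 := (IntervalIntegrable.iff_comp_neg (by simp)).1 h1
    exact (intervalIntegrable_iff_integrableOn_Ioc_of_le (by linarith)).1 h2.symm
  -- integrability of A * G on subintervals
  have hAG_int : ∀ c ∈ I, ∀ d ∈ I, c ≤ d → IntegrableOn (fun s => A s * G s) (Ioc c d) volume := by
    intro c hc d hd hcd
    have hsub := hsubI c hc d hd
    obtain ⟨C, hC⟩ := (isCompact_Icc (a := c) (b := d)).exists_bound_of_continuousOn
      (hGcont.mono hsub)
    have h1 : IntegrableOn A (Ioc c d) volume :=
      (hA_int c hc d hd hcd).mono_set Ioc_subset_Icc_self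
    have h2 := h1.bdd_mul (c := C)
      (hmonoI (fun x hx => hsub (Ioc_subset_Icc_self hx)) (hGcont.aestronglyMeasurable hImeas))
      ((ae_restrict_iff' measurableSet_Ioc).2 (Eventually.of_forall fun s hs =>
        hC s (Ioc_subset_Icc_self hs)))
    exact IntegrableOn.congr_fun h2 (fun x _ => mul_comm _ _) measurableSet_Ioc
  -- interval integrability of g'
  have hg'II : ∀ t ∈ I, IntervalIntegrable g' volume 0 t := by
    intro t ht
    rcases le_total 0 t with h0t | ht0
    · rw [intervalIntegrable_iff_integrableOn_Ioc_of_le h0t]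
      exact (hAG_int 0 h0I t ht h0t).add (hfνD_int 0 h0I t ht)
    · rw [intervalIntegrable_iff, Set.uIoc_of_ge ht0]
      exact (hAG_int t ht 0 h0I ht0).add (hfνD_int t ht 0 h0I)
  -- representation of g as primitive of g'
  have hg'repr : ∀ t ∈ I, g t = ∫ s in (0:ℝ)..t, g' s := by
    intro t ht
    have hgg : g t = f (ν t) * G t := by rw [hg t, hGdef, mul_assoc]
    rcases lt_trichotomy t 0 with hneg | rfl | hpos
    · -- negative case via reflection
      have hmem : ∀ s ∈ Icc 0 (-t), -s ∈ I :=
        fun s hs => hsubI t ht 0 h0I ⟨by linarith [hs.2], by linarith [hs.1]⟩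
      have happ := parts_aux (a := 0) (b := -t) (by linarith)
        (fun s => -A (-s)) (fun s => G (-s)) (fun s => -D (-s))
        (fun s => f (ν (-s))) (fun s => M * |ν (-s)| ^ q)
        (fun s hs => by
          simpa [Function.comp_def, mul_neg_one] using
            (hGderiv (-s) (hmem s hs)).comp s (hasDerivAt_neg s))
        (by
          have := hreflect A t 0 hneg.le
            ((hA_int t ht 0 h0I hneg.le).mono_set Ioc_subset_Icc_self)
          rw [neg_zero] at this
          exact this.neg)
        (by
          intro r hr
          have hrI : -r ∈ I := ⟨by linarith [hr.2, ht.1], by linarith [hr.1]⟩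
          have hνr : ν (-r) < 0 := by
            rw [← hν0]
            exact hν_mono hrI h0I (by linarith [hr.1])
          have h1 := hD_int t ht (-r) hrI (by linarith [hr.2]) (Or.inr hνr)
          have h2 := (hreflect D t (-r) (by linarith [hr.2]) h1).neg
          rwa [neg_neg] at h2)
        (by
          intro s hs
          have hsI : -s ∈ I := hmem s hs
          show f (ν (-s)) = ∫ r in Ioc 0 s, -A (-r)
          rw [hu_neg (-s) hsI (by linarith [hs.1])]
          have h1 : ∫ r in Ioc 0 s, -A (-r) = -∫ r in Ioc 0 s, A (-r) := by
            rw [← integral_neg]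
          rw [h1]
          congr 1
          rw [← intervalIntegral.integral_of_le hs.1, intervalIntegral.integral_comp_neg,
            neg_zero, intervalIntegral.integral_of_le (by linarith [hs.1] : -s ≤ 0)]
        )
        (by
          have h1 := hreflect (fun s => f (ν s) * D s) t 0 hneg.le (hfνD_int t ht 0 h0I)
          rw [neg_zero] at h1
          exact IntegrableOn.congr_fun h1.neg
            (fun x _ => by simp only [Pi.neg_apply]; ring) measurableSet_Ioc)
        (by
          intro s hs
          have hsI : -s ∈ I := hmem s (Ioc_subset_Icc_self hs)
          have hνs : ν (-s) ≤ 0 := by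
            rw [← hν0]
            exact hν_mono.monotoneOn hsI h0I (by linarith [hs.1])
          have h1 : ∫ r in Ioc 0 s, |-A (-r)| = ∫ r in Ioc (-s) 0, |A r| := by
            simp_rw [abs_neg]
            rw [← intervalIntegral.integral_of_le hs.1.le]
            refine (intervalIntegral.integral_comp_neg (a := 0) (b := s)
              (f := fun y => |A y|)).trans ?_
            rw [neg_zero, intervalIntegral.integral_of_le (by linarith [hs.1] : -s ≤ 0)]
          rw [h1, ← integral_Icc_eq_integral_Ioc,
            hAabs_repr (-s) hsI 0 h0I (by linarith [hs.1]), hν0,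
            integral_Icc_eq_integral_Ioc]
          calc ∫ x in Ioc (ν (-s)) 0, |f' x| ≤ M * (0 - ν (-s)) ^ q := hkeyI (ν (-s)) 0 hνs
            _ = M * |ν (-s)| ^ q := by rw [zero_sub, abs_of_nonpos hνs]
        )
        (by
          have h0 : IntegrableOn (fun s => (M * |ν s| ^ q) * |D s|) (Ioc t 0) volume := by
            refine IntegrableOn.congr_fun (((hh₂int t ht 0 h0I).abs).const_mul M) (fun x _ => ?_)
              measurableSet_Ioc
            rw [hh₂D x, abs_mul, abs_of_nonneg (Real.rpow_nonneg (abs_nonneg _) q)]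
            ring
          have h1 := hreflect _ t 0 hneg.le h0
          rw [neg_zero] at h1
          exact IntegrableOn.congr_fun h1 (fun x _ => by rw [abs_neg]) measurableSet_Ioc)
      -- now happ gives the identity on [0, -t]
      have hLHS : ∫ s in Ioc 0 (-t), (-A (-s) * G (-s) + f (ν (-s)) * -D (-s))
          = ∫ s in (0:ℝ)..t, g' s := by
        have h1 : ∫ s in Ioc 0 (-t), (-A (-s) * G (-s) + f (ν (-s)) * -D (-s))
            = ∫ s in Ioc 0 (-t), -g' (-s) :=
          setIntegral_congr_fun measurableSet_Ioc fun s _ => by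
            simp only [hg'def]; ring
        rw [h1, ← intervalIntegral.integral_of_le (by linarith : (0:ℝ) ≤ -t)]
        have h2 : ∫ s in (0:ℝ)..(-t), -g' (-s) = -∫ s in (0:ℝ)..(-t), g' (-s) := by
          rw [← intervalIntegral.integral_neg]
        rw [h2, intervalIntegral.integral_comp_neg, neg_zero, neg_neg,
          ← intervalIntegral.integral_symm]
      rw [hgg, ← hLHS, happ]
      simp only [neg_neg]
    · rw [intervalIntegral.integral_same, hg 0, hν0, hf0]
      ring
    · -- positive case
      have hIcc : Icc 0 t ⊆ I := hsubI 0 h0I t ht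
      have happ := parts_aux (a := 0) (b := t) hpos.le A G D
        (fun s => f (ν s)) (fun s => M * |ν s| ^ q)
        (fun s hs => hGderiv s (hIcc hs))
        ((hA_int 0 h0I t ht hpos.le).mono_set Ioc_subset_Icc_self)
        (by
          intro r hr
          have hrI : r ∈ I := ⟨lt_trans h0I.1 hr.1, lt_of_le_of_lt hr.2 ht.2⟩
          have hνr : 0 < ν r := by
            rw [← hν0]
            exact hν_mono h0I hrI hr.1
          exact hD_int r hrI t ht hr.2 (Or.inl hνr))
        (fun s hs => hu_pos s (hIcc hs) hs.1)
        (hfνD_int 0 h0I t ht)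
        (by
          intro s hs
          have hsI : s ∈ I := hIcc (Ioc_subset_Icc_self hs)
          have hνs : 0 ≤ ν s := by
            rw [← hν0]
            exact hν_mono.monotoneOn h0I hsI hs.1.le
          rw [← integral_Icc_eq_integral_Ioc, hAabs_repr 0 h0I s hsI hs.1.le, hν0,
            integral_Icc_eq_integral_Ioc]
          calc ∫ x in Ioc 0 (ν s), |f' x| ≤ M * (ν s - 0) ^ q := hkeyI 0 (ν s) hνs
            _ = M * |ν s| ^ q := by rw [sub_zero, abs_of_nonneg hνs])
        (by
          refine IntegrableOn.congr_fun (((hh₂int 0 h0I t ht).abs).const_mul M) (fun x _ => ?_)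
            measurableSet_Ioc
          rw [hh₂D x, abs_mul, abs_of_nonneg (Real.rpow_nonneg (abs_nonneg _) q)]
          ring)
      rw [hgg, ← happ, intervalIntegral.integral_of_le hpos.le]
  -- norm bounds
  have hsum : eLpNorm g' p (volume.restrict I) ≤
      eLpNorm (fun s => A s * G s) p (volume.restrict I) +
      eLpNorm (fun s => f (ν s) * D s) p (volume.restrict I) := by
    have heq : g' = (fun s => A s * G s) + fun s => f (ν s) * D s := rfl
    rw [heq]
    exact eLpNorm_add_le (hAmeasI.mul (hGcont.aestronglyMeasurable hImeas))
      ((hfνcont.aestronglyMeasurable hImeas).mul hDmeasI) hp1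
  have hterm2 : eLpNorm (fun s => f (ν s) * D s) p (volume.restrict I) ≤
      eLpNorm h₂ p (volume.restrict I) * eLpNorm f' p volume := by
    have hb : ∀ᵐ s ∂volume.restrict I, ‖f (ν s) * D s‖ ≤ ‖M * h₂ s‖ := by
      refine (ae_restrict_iff' hImeas).2 (Eventually.of_forall fun s hs => ?_)
      have hD2 : |h₂ s| = |D s| * |ν s| ^ q := by
        rw [hh₂D s, abs_mul, abs_of_nonneg (Real.rpow_nonneg (abs_nonneg _) q)]
      rw [Real.norm_eq_abs, Real.norm_eq_abs, abs_mul, abs_mul, abs_of_nonneg hM0, hD2]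
      calc |f (ν s)| * |D s| ≤ (M * |ν s| ^ q) * |D s| :=
            mul_le_mul_of_nonneg_right (habsf (ν s)) (abs_nonneg _)
        _ = M * (|D s| * |ν s| ^ q) := by ring
    calc eLpNorm (fun s => f (ν s) * D s) p (volume.restrict I)
        ≤ eLpNorm (fun s => M * h₂ s) p (volume.restrict I) := eLpNorm_mono_ae hb
      _ = ‖M‖ₑ * eLpNorm h₂ p (volume.restrict I) := by
          rw [show (fun s => M * h₂ s) = M • h₂ from rfl, eLpNorm_const_smul]
      _ = eLpNorm h₂ p (volume.restrict I) * eLpNorm f' p volume := by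
          rw [Real.enorm_eq_ofReal hM0, hofM, mul_comm]
  have hterm1 : eLpNorm (fun s => A s * G s) p (volume.restrict I) ≤
      eLpNorm h₁ ⊤ (volume.restrict I) * eLpNorm f' p volume := by
    by_cases hptop : p = ⊤
    · subst hptop
      have hq' : q = 1 := by rw [hq]; simp
      have hT0 : ∀ᵐ x ∂(volume : Measure ℝ), (‖f'm x‖₊ : ℝ≥0∞) ≤ eLpNorm f' ⊤ volume := by
        rw [eLpNorm_exponent_top]
        filter_upwards [ae_le_eLpNormEssSup (f := f') (μ := volume), hf'm_ae] with x h1 h2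
        rw [← h2]
        exact h1
      set T : Set ℝ := {x : ℝ | ¬ (‖f'm x‖₊ : ℝ≥0∞) ≤ eLpNorm f' ⊤ volume} with hTdef
      have hTmeas : MeasurableSet T := by
        have h1 : MeasurableSet {x : ℝ | (‖f'm x‖₊ : ℝ≥0∞) ≤ eLpNorm f' ⊤ volume} :=
          measurableSet_le (hf'm_meas.nnnorm.coe_nnreal_ennreal) measurable_const
        exact h1.compl
      have hTnull : volume T = 0 := ae_iff.1 hT0
      have hae2 : ∀ᵐ s ∂volume.restrict I, ν' s = 0 ∨ ν s ∉ T := by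
        have hlint : ∫⁻ s in I,
            ENNReal.ofReal |ν' s| * T.indicator (fun _ => (1:ℝ≥0∞)) (ν s) = 0 := by
          rw [← lintegral_image_eq_lintegral_abs_deriv_mul' hImeas hνDW hInj
            (T.indicator fun _ => (1:ℝ≥0∞)), himgI, Measure.restrict_univ,
            lintegral_indicator hTmeas, setLIntegral_one, hTnull]
        have hmeas2 : AEMeasurable (fun s =>
            ENNReal.ofReal |ν' s| * T.indicator (fun _ => (1:ℝ≥0∞)) (ν s))
            (volume.restrict I) :=
          (ENNReal.measurable_ofReal.comp_aemeasurable
            ((hν'cont.abs).aemeasurable hImeas)).mul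
            ((measurable_one.indicator hTmeas).comp_aemeasurable hνae)
        have h0 := (lintegral_eq_zero_iff' hmeas2).1 hlint
        filter_upwards [h0] with s hs
        by_cases hν's : ν' s = 0
        · exact Or.inl hν's
        · right
          intro hνsT
          rw [Set.indicator_of_mem hνsT, mul_one, Pi.zero_apply,
            ENNReal.ofReal_eq_zero] at hs
          exact hν's (abs_eq_zero.1 (le_antisymm hs (abs_nonneg _)))
      have hb1 : ∀ᵐ s ∂volume.restrict I, ‖A s * G s‖ ≤ ‖M * h₁ s‖ := by
        filter_upwards [hae2, ae_restrict_mem hImeas] with s hsor hsI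
        have hν'0 : 0 ≤ ν' s := hν'nonneg s hsI
        have hh₁nn : 0 ≤ h₁ s := by
          rw [hh₁ s]
          exact mul_nonneg (hρ_pos _).le (Real.rpow_nonneg hν'0 _)
        have hRHS : ‖M * h₁ s‖ = M * h₁ s := by
          rw [Real.norm_eq_abs, abs_of_nonneg (mul_nonneg hM0 hh₁nn)]
        rcases hsor with h0 | hT'
        · have hz : A s * G s = 0 := by simp [hAdef, hGdef, h0]
          rw [hz, norm_zero, hRHS]
          exact mul_nonneg hM0 hh₁nn
        · have hC : ‖f'm (ν s)‖ ≤ M := by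
            have h2 : (‖f'm (ν s)‖₊ : ℝ≥0∞) ≤ eLpNorm f' ⊤ volume := not_not.1 hT'
            have h3 := ENNReal.toReal_mono hMfin h2
            simpa [hMdef] using h3
          have hAG : ‖A s * G s‖ = ‖f'm (ν s)‖ * (ρ (ν s) * ν' s ^ 2) := by
            rw [Real.norm_eq_abs, Real.norm_eq_abs]
            simp only [hAdef, hGdef]
            rw [show f'm (ν s) * ν' s * (ρ (ν s) * ν' s)
                = f'm (ν s) * (ρ (ν s) * ν' s ^ 2) by ring, abs_mul,
              abs_of_nonneg (mul_nonneg (hρ_pos _).le (sq_nonneg _))]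
          rw [hAG, hRHS, hh₁ s, hq']
          have h4 : ν' s ^ (1 + 1 : ℝ) = ν' s ^ 2 := by
            rw [show (1 + 1 : ℝ) = ((2:ℕ):ℝ) by norm_num, Real.rpow_natCast]
          rw [h4]
          exact mul_le_mul_of_nonneg_right hC (mul_nonneg (hρ_pos _).le (sq_nonneg _))
      calc eLpNorm (fun s => A s * G s) ⊤ (volume.restrict I)
          ≤ eLpNorm (fun s => M * h₁ s) ⊤ (volume.restrict I) := eLpNorm_mono_ae hb1
        _ = ‖M‖ₑ * eLpNorm h₁ ⊤ (volume.restrict I) := by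
            rw [show (fun s => M * h₁ s) = M • h₁ from rfl, eLpNorm_const_smul]
        _ = eLpNorm h₁ ⊤ (volume.restrict I) * eLpNorm f' ⊤ volume := by
            rw [Real.enorm_eq_ofReal hM0, hofM, mul_comm]
    · -- finite p
      have hpR : 0 < p.toReal := ENNReal.toReal_pos hp0 hptop
      set r : ℝ := (1/p).toReal with hrdef
      have hr : r = 1/p.toReal := by rw [hrdef, one_div, ENNReal.toReal_inv, one_div]
      have hr0 : 0 < r := by rw [hr]; positivity
      have hrpR : r * p.toReal = 1 := by
        rw [hr]
        field_simp
      have hqr : 1 + q + r = 2 := by rw [hq, hrdef]; ring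
      set φ : ℝ → ℝ := fun s => f'm (ν s) * ν' s ^ r with hφdef
      have hφmeas : AEStronglyMeasurable φ (volume.restrict I) :=
        ((hf'm_meas.comp_aemeasurable hνae).aestronglyMeasurable).mul
          ((hν'cont.rpow_const (fun x _ => Or.inr hr0.le)).aestronglyMeasurable hImeas)
      have hb : ∀ᵐ s ∂volume.restrict I, ‖A s * G s‖ ≤ ‖h₁ s * φ s‖ := by
        refine (ae_restrict_iff' hImeas).2 (Eventually.of_forall fun s hs => ?_)
        have hν'0 : 0 ≤ ν' s := hν'nonneg s hs
        rcases eq_or_lt_of_le hν'0 with h0 | hpos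
        · have hz : A s * G s = 0 := by simp [hAdef, hGdef, ← h0]
          rw [hz, norm_zero]
          exact norm_nonneg _
        · have he : h₁ s * φ s = f'm (ν s) * (ρ (ν s) * ν' s ^ 2) := by
            rw [hh₁ s, hφdef]
            simp only
            rw [show ρ (ν s) * ν' s ^ (1+q) * (f'm (ν s) * ν' s ^ r)
                = f'm (ν s) * (ρ (ν s) * (ν' s ^ (1+q) * ν' s ^ r)) by ring,
              ← Real.rpow_add hpos, show 1 + q + r = 2 from hqr,
              show ν' s ^ (2:ℝ) = ν' s ^ 2 by
                rw [show (2:ℝ) = ((2:ℕ):ℝ) by norm_num, Real.rpow_natCast]]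
          have he2 : A s * G s = f'm (ν s) * (ρ (ν s) * ν' s ^ 2) := by
            simp only [hAdef, hGdef]
            ring
          rw [he2, he]
      have hφnorm : eLpNorm φ p (volume.restrict I) ≤ eLpNorm f' p volume := by
        rw [eLpNorm_eq_lintegral_rpow_enorm_toReal hp0 hptop,
          eLpNorm_eq_lintegral_rpow_enorm_toReal hp0 hptop]
        refine ENNReal.rpow_le_rpow ?_ (by positivity)
        have hpt : ∀ s ∈ I, ((‖φ s‖₊ : ℝ≥0∞)) ^ p.toReal
            = ENNReal.ofReal |ν' s| *
              ((fun x => ((‖f'm x‖₊ : ℝ≥0∞)) ^ p.toReal) (ν s)) := by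
          intro s hs
          have hν'0 : 0 ≤ ν' s := hν'nonneg s hs
          rw [hφdef]
          simp only
          calc ((‖f'm (ν s) * ν' s ^ r‖₊ : ℝ≥0∞)) ^ p.toReal
              = ((‖f'm (ν s)‖₊ : ℝ≥0∞) * (‖ν' s ^ r‖₊ : ℝ≥0∞)) ^ p.toReal := by
                rw [nnnorm_mul, ENNReal.coe_mul]
            _ = (‖f'm (ν s)‖₊ : ℝ≥0∞) ^ p.toReal * ((‖ν' s ^ r‖₊ : ℝ≥0∞)) ^ p.toReal :=
                ENNReal.mul_rpow_of_nonneg _ _ hpR.le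
            _ = ENNReal.ofReal |ν' s| * (‖f'm (ν s)‖₊ : ℝ≥0∞) ^ p.toReal := by
                rw [← enorm_eq_nnnorm (ν' s ^ r), Real.enorm_eq_ofReal (Real.rpow_nonneg hν'0 r),
                  ENNReal.ofReal_rpow_of_nonneg (Real.rpow_nonneg hν'0 r) hpR.le,
                  ← Real.rpow_mul hν'0, hrpR, Real.rpow_one, abs_of_nonneg hν'0,
                  mul_comm]
        refine le_of_eq ?_
        calc ∫⁻ s in I, (‖φ s‖₊ : ℝ≥0∞) ^ p.toReal ∂volume
            = ∫⁻ s in I, ENNReal.ofReal |ν' s| *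
                ((fun x => ((‖f'm x‖₊ : ℝ≥0∞)) ^ p.toReal) (ν s)) ∂volume :=
              setLIntegral_congr_fun hImeas hpt
          _ = ∫⁻ x in ν '' I, (‖f'm x‖₊ : ℝ≥0∞) ^ p.toReal ∂volume :=
              (lintegral_image_eq_lintegral_abs_deriv_mul' hImeas hνDW hInj
                (fun x => ((‖f'm x‖₊ : ℝ≥0∞)) ^ p.toReal)).symm
          _ = ∫⁻ x, (‖f'm x‖₊ : ℝ≥0∞) ^ p.toReal ∂volume := by
              rw [himgI, Measure.restrict_univ]
          _ = ∫⁻ x, (‖f' x‖₊ : ℝ≥0∞) ^ p.toReal ∂volume := by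
              refine lintegral_congr_ae ?_
              filter_upwards [hf'm_ae] with x hx
              rw [hx]
      calc eLpNorm (fun s => A s * G s) p (volume.restrict I)
          ≤ eLpNorm (fun s => h₁ s * φ s) p (volume.restrict I) := eLpNorm_mono_ae hb
        _ ≤ eLpNorm h₁ ⊤ (volume.restrict I) * eLpNorm φ p (volume.restrict I) :=
            by simpa using (eLpNorm_le_eLpNorm_top_mul_eLpNorm p h₁ hφmeas (· * ·) 1
                  (Eventually.of_forall fun s => by simp [nnnorm_mul]))
        _ ≤ eLpNorm h₁ ⊤ (volume.restrict I) * eLpNorm f' p volume :=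
            mul_le_mul_right hφnorm _
  have hfinal : eLpNorm g' p (volume.restrict I) ≤
      (eLpNorm h₁ ⊤ (volume.restrict I) + eLpNorm h₂ p (volume.restrict I)) *
        eLpNorm f' p volume := by
    calc eLpNorm g' p (volume.restrict I)
        ≤ _ + _ := hsum
      _ ≤ eLpNorm h₁ ⊤ (volume.restrict I) * eLpNorm f' p volume +
          eLpNorm h₂ p (volume.restrict I) * eLpNorm f' p volume := add_le_add hterm1 hterm2
      _ = _ := (add_mul _ _ _).symm
  exact ⟨by rw [hg 0, hν0, hf0]; ring, g', fun t ht => ⟨hg'II t ht, hg'repr t ht⟩, hfinal,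
    lt_of_le_of_lt hfinal (ENNReal.mul_lt_top (ENNReal.add_lt_top.2 ⟨hh₁_fin, hh₂_fin⟩)
      hf'Lp.2)⟩
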